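/- Theorem 1, statement 2 (identification of the concurrent average treatment effect using all controls): under assumptions (I-k), (C-k), (P-k), (I-0), (C-0), (P-0) and (Pool), the concurrent average treatment effect cATE(k) := 𝔼[Yᵏ − Y⁰ | V=1] satisfies cATE(k) = Σ_{(w,e): 𝒫(W=w,E=e,V=1)>0} (μ_oc(k,w,e) − μ_all(0,w,e)) · p(w,e | V=1). -/

import Mathlib

open MeasureTheory Finset

/-- Conditional expectation given an event: `𝔼[X | B] := 𝔼[X · 1_B] / 𝒫(B)`. -/
noncomputable def condMean {Ω : Type*} [MeasurableSpace Ω] (P : Measure Ω)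
    (X : Ω → ℝ) (B : Set Ω) : ℝ :=
  (∫ ω, B.indicator X ω ∂P) / (P B).toReal

lemma condMean_sub' {Ω : Type*} [MeasurableSpace Ω] (P : Measure Ω)
    (X Z : Ω → ℝ) (hX : Integrable X P) (hZ : Integrable Z P)
    {B : Set Ω} (hB : MeasurableSet B) :
    condMean P (fun ω => X ω - Z ω) B = condMean P X B - condMean P Z B := by
  unfold condMean
  rw [← sub_div]
  congr 1
  rw [← integral_sub (hX.indicator hB) (hZ.indicator hB)]
  congr 1
  funext ω
  by_cases h : ω ∈ B <;> simp [Set.indicator, h]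

lemma integral_indicator_eq {Ω : Type*} [MeasurableSpace Ω] (P : Measure Ω)
    [IsProbabilityMeasure P] (X : Ω → ℝ)
    {B : Set Ω} (hB : MeasurableSet B) :
    (∫ ω, B.indicator X ω ∂P) =
      if 0 < P B then condMean P X B * (P B).toReal else 0 := by
  split_ifs with h
  · unfold condMean
    rw [div_mul_cancel₀]
    exact ENNReal.toReal_ne_zero.2 ⟨h.ne', measure_ne_top P B⟩
  · push_neg at h
    have hB0 : P B = 0 := le_antisymm h zero_le
    rw [integral_indicator hB, Measure.restrict_eq_zero.2 hB0, integral_zero_measure]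

lemma condMean_partition {Ω : Type*} [MeasurableSpace Ω] (P : Measure Ω)
    [IsProbabilityMeasure P]
    {𝓦 ℰ : Type*} [Fintype 𝓦] [Fintype ℰ]
    [MeasurableSpace 𝓦] [MeasurableSingletonClass 𝓦]
    [MeasurableSpace ℰ] [MeasurableSingletonClass ℰ]
    (W : Ω → 𝓦) (E : Ω → ℰ) (V : Ω → Fin 2)
    (hW : Measurable W) (hE : Measurable E) (hV : Measurable V)
    (X : Ω → ℝ) (hX : Integrable X P) :
    condMean P X {ω | V ω = 1} =
      ∑ w : 𝓦, ∑ e : ℰ,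
        if 0 < P {ω | W ω = w ∧ E ω = e ∧ V ω = 1} then
          condMean P X {ω | W ω = w ∧ E ω = e ∧ V ω = 1} *
            ((P {ω | W ω = w ∧ E ω = e ∧ V ω = 1}).toReal / (P {ω | V ω = 1}).toReal)
        else 0 := by
  classical
  have hmC : ∀ (w : 𝓦) (e : ℰ), MeasurableSet {ω | W ω = w ∧ E ω = e ∧ V ω = 1} :=
    fun w e => (hW (measurableSet_singleton w)).inter
      ((hE (measurableSet_singleton e)).inter (hV (measurableSet_singleton 1)))
  have key : (∫ ω, ({ω | V ω = 1} : Set Ω).indicator X ω ∂P) =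
      ∑ w : 𝓦, ∑ e : ℰ, ∫ ω, ({ω | W ω = w ∧ E ω = e ∧ V ω = 1} : Set Ω).indicator X ω ∂P := by
    symm
    calc ∑ w : 𝓦, ∑ e : ℰ, ∫ ω, ({ω | W ω = w ∧ E ω = e ∧ V ω = 1} : Set Ω).indicator X ω ∂P
        = ∑ w : 𝓦, ∫ ω, ∑ e : ℰ, ({ω | W ω = w ∧ E ω = e ∧ V ω = 1} : Set Ω).indicator X ω ∂P :=
          Finset.sum_congr rfl (fun w _ =>
            (integral_finset_sum _ (fun e _ => hX.indicator (hmC w e))).symm)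
      _ = ∫ ω, ∑ w : 𝓦, ∑ e : ℰ, ({ω | W ω = w ∧ E ω = e ∧ V ω = 1} : Set Ω).indicator X ω ∂P :=
          (integral_finset_sum _ (fun w _ =>
            integrable_finset_sum _ (fun e _ => hX.indicator (hmC w e)))).symm
      _ = ∫ ω, ({ω | V ω = 1} : Set Ω).indicator X ω ∂P := by
          congr 1
          funext ω
          by_cases hv : V ω = 1
          · have h1 : ∀ x : 𝓦, (∑ x1 : ℰ,
                ({ω | W ω = x ∧ E ω = x1 ∧ V ω = 1} : Set Ω).indicator X ω)
                = if W ω = x then X ω else 0 := by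
              intro x
              by_cases hx : W ω = x
              · rw [Finset.sum_eq_single (E ω)]
                · simp [Set.indicator, Set.mem_setOf_eq, hx, hv]
                · intro b _ hb
                  simp only [Set.indicator, Set.mem_setOf_eq]
                  rw [if_neg]
                  rintro ⟨-, h2, -⟩
                  exact hb.symm h2
                · intro hmem; exact absurd (Finset.mem_univ _) hmem
              · simp [Set.indicator, Set.mem_setOf_eq, hx]
            simp only [h1]
            rw [Finset.sum_eq_single (W ω)]
            · simp [Set.indicator, Set.mem_setOf_eq, hv]
            · intro b _ hb
              rw [if_neg]
              exact fun h => hb.symm h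
            · intro hmem; exact absurd (Finset.mem_univ _) hmem
          · simp [Set.indicator, Set.mem_setOf_eq, hv]
  conv_lhs => rw [condMean]
  rw [key, Finset.sum_div]
  congr 1
  funext w
  rw [Finset.sum_div]
  congr 1
  funext e
  rw [integral_indicator_eq P X (hmC w e)]
  split_ifs with h
  · rw [mul_div_assoc]
  · simp

/-- Theorem 1, statement 2: identification of the concurrent average treatment effect
`cATE(k) := 𝔼[Yᵏ − Y⁰ | V=1]` using all (concurrent and non-concurrent) controls, under
(I-k), (C-k), (P-k), (I-0), (C-0), (P-0) and (Pool). -/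
theorem cATE_identification_all
    {Ω : Type*} [MeasurableSpace Ω] (P : Measure Ω) [IsProbabilityMeasure P]
    {𝓦 ℰ : Type*} [Fintype 𝓦] [Fintype ℰ] [Nonempty 𝓦] [Nonempty ℰ]
    [MeasurableSpace 𝓦] [MeasurableSingletonClass 𝓦]
    [MeasurableSpace ℰ] [MeasurableSingletonClass ℰ]
    (W : Ω → 𝓦) (E : Ω → ℰ) (V : Ω → Fin 2) {K : ℕ} (A : Ω → Fin (K + 1))
    (k : Fin (K + 1)) (Y Yk Y0 : Ω → ℝ)
    (hW : Measurable W) (hE : Measurable E) (hV : Measurable V) (hA : Measurable A)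
    (hY : Integrable Y P) (hYk : Integrable Yk P) (hY0 : Integrable Y0 P)
    (hV1 : 0 < P {ω | V ω = 1})
    -- (I-k) weak A-ignorability for arm k
    (hIk : ∀ (w : 𝓦) (e : ℰ), 0 < P {ω | A ω = k ∧ W ω = w ∧ E ω = e ∧ V ω = 1} →
      condMean P Yk {ω | W ω = w ∧ E ω = e ∧ V ω = 1} =
        condMean P Yk {ω | A ω = k ∧ W ω = w ∧ E ω = e ∧ V ω = 1})
    -- (C-k) consistency in mean for arm k
    (hCk : ∀ (w : 𝓦) (e : ℰ), 0 < P {ω | A ω = k ∧ W ω = w ∧ E ω = e ∧ V ω = 1} →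
      condMean P Yk {ω | A ω = k ∧ W ω = w ∧ E ω = e ∧ V ω = 1} =
        condMean P Y {ω | A ω = k ∧ W ω = w ∧ E ω = e ∧ V ω = 1})
    -- (P-k) positivity for arm k
    (hPk : ∀ (w : 𝓦) (e : ℰ), 0 < P {ω | W ω = w ∧ E ω = e ∧ V ω = 1} →
      0 < P {ω | A ω = k ∧ W ω = w ∧ E ω = e ∧ V ω = 1})
    -- (I-0) weak A-ignorability for arm 0
    (hI0 : ∀ (w : 𝓦) (e : ℰ), 0 < P {ω | A ω = 0 ∧ W ω = w ∧ E ω = e ∧ V ω = 1} →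
      condMean P Y0 {ω | W ω = w ∧ E ω = e ∧ V ω = 1} =
        condMean P Y0 {ω | A ω = 0 ∧ W ω = w ∧ E ω = e ∧ V ω = 1})
    -- (C-0) consistency in mean for arm 0
    (hC0 : ∀ (w : 𝓦) (e : ℰ), 0 < P {ω | A ω = 0 ∧ W ω = w ∧ E ω = e ∧ V ω = 1} →
      condMean P Y0 {ω | A ω = 0 ∧ W ω = w ∧ E ω = e ∧ V ω = 1} =
        condMean P Y {ω | A ω = 0 ∧ W ω = w ∧ E ω = e ∧ V ω = 1})
    -- (P-0) positivity for arm 0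
    (hP0 : ∀ (w : 𝓦) (e : ℰ), 0 < P {ω | W ω = w ∧ E ω = e ∧ V ω = 1} →
      0 < P {ω | A ω = 0 ∧ W ω = w ∧ E ω = e ∧ V ω = 1})
    -- (Pool) pooling of concurrent and non-concurrent controls
    (hPool : ∀ (w : 𝓦) (e : ℰ), 0 < P {ω | A ω = 0 ∧ W ω = w ∧ E ω = e ∧ V ω = 1} →
      condMean P Y {ω | A ω = 0 ∧ W ω = w ∧ E ω = e ∧ V ω = 1} =
        condMean P Y {ω | A ω = 0 ∧ W ω = w ∧ E ω = e})
    :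
    condMean P (fun ω => Yk ω - Y0 ω) {ω | V ω = 1} =
      ∑ w : 𝓦, ∑ e : ℰ,
        if 0 < P {ω | W ω = w ∧ E ω = e ∧ V ω = 1} then
          (condMean P Y {ω | A ω = k ∧ W ω = w ∧ E ω = e ∧ V ω = 1} -
               condMean P Y {ω | A ω = 0 ∧ W ω = w ∧ E ω = e}) *
            ((P {ω | W ω = w ∧ E ω = e ∧ V ω = 1}).toReal / (P {ω | V ω = 1}).toReal)
        else 0 := by
  classical
  have hmV : MeasurableSet {ω | V ω = 1} := hV (measurableSet_singleton 1)
  rw [condMean_sub' P Yk Y0 hYk hY0 hmV,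
      condMean_partition P W E V hW hE hV Yk hYk,
      condMean_partition P W E V hW hE hV Y0 hY0,
      ← Finset.sum_sub_distrib]
  refine Finset.sum_congr rfl (fun w _ => ?_)
  rw [← Finset.sum_sub_distrib]
  refine Finset.sum_congr rfl (fun e _ => ?_)
  split_ifs with h
  · have hk := hPk w e h
    have h0 := hP0 w e h
    rw [hIk w e hk, hCk w e hk, hI0 w e h0, hC0 w e h0, hPool w e h0, ← sub_mul]
  · simp
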